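/- Compatibility of the two branches: for every z ≥ 0, ψ₋(z) = ∫_{[0, D_μ⁻¹(G_μ(−z)))} [n([s,∞)) · (1 + μ̄(s) − μ̄(G_μ⁻¹(D_μ(s))))]⁻¹ dμ(s); that is, ψ₋(z) = ψ₊(D_μ⁻¹(G_μ(−z))), where ψ₊(∞) denotes the integral of the ψ₊-integrand over all of [0,∞). -/

import Mathlib

open MeasureTheory Filter
open scoped ENNReal Topology Classical

/-- Topological support of a Borel measure on ℝ. -/
def measSupport (μ : MeasureTheory.Measure ℝ) : Set ℝ :=
  {x | ∀ U : Set ℝ, IsOpen U → x ∈ U → 0 < μ U}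

/-- `D_μ(y) = ∫_{[0,y]} n([s,∞))⁻¹ dμ(s)` for `y ≥ 0` (equal to `0` for `y < 0`). -/
noncomputable def Dmu (μ n : MeasureTheory.Measure ℝ) (y : ℝ) : ℝ≥0∞ :=
  ∫⁻ s in Set.Icc (0 : ℝ) y, (n (Set.Ici s))⁻¹ ∂μ

/-- `G_μ(x) = ∫_{[x,0]} n((−∞,s])⁻¹ dμ(s)` for `x ≤ 0` (equal to `0` for `x > 0`). -/
noncomputable def Gmu (μ n : MeasureTheory.Measure ℝ) (x : ℝ) : ℝ≥0∞ :=
  ∫⁻ s in Set.Icc x (0 : ℝ), (n (Set.Iic s))⁻¹ ∂μ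

/-- The set `{y ≥ 0 : D_μ(y) > v}`; its infimum is the right-continuous inverse
`D_μ⁻¹(v)`, with `D_μ⁻¹(v) = ∞` when the set is empty. -/
def DinvSet (μ n : MeasureTheory.Measure ℝ) (v : ℝ≥0∞) : Set ℝ :=
  {y : ℝ | 0 ≤ y ∧ v < Dmu μ n y}

/-- The set `{x ≤ 0 : G_μ(x) > v}`; its supremum is the right-continuous inverse
`G_μ⁻¹(v)`, with `G_μ⁻¹(v) = −∞` when the set is empty. -/
def GinvSet (μ n : MeasureTheory.Measure ℝ) (v : ℝ≥0∞) : Set ℝ :=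
  {x : ℝ | x ≤ 0 ∧ v < Gmu μ n x}

/-- `μ̄(D_μ⁻¹(v))`, with the convention `μ̄(∞) = 0`. -/
noncomputable def mubarDinv (μ n : MeasureTheory.Measure ℝ) (v : ℝ≥0∞) : ℝ :=
  if (DinvSet μ n v).Nonempty then (μ (Set.Ici (sInf (DinvSet μ n v)))).toReal else 0

/-- `μ̄(G_μ⁻¹(v))`, with the convention `μ̄(−∞) = 1`. -/
noncomputable def mubarGinv (μ n : MeasureTheory.Measure ℝ) (v : ℝ≥0∞) : ℝ :=
  if (GinvSet μ n v).Nonempty then (μ (Set.Ici (sSup (GinvSet μ n v)))).toReal else 1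

/-- `n([D_μ⁻¹(v),∞))`, with the convention that it is `0` when `D_μ⁻¹(v) = ∞`. -/
noncomputable def nDinv (μ n : MeasureTheory.Measure ℝ) (v : ℝ≥0∞) : ℝ≥0∞ :=
  if (DinvSet μ n v).Nonempty then n (Set.Ici (sInf (DinvSet μ n v))) else 0

/-- `n((−∞,G_μ⁻¹(v)])`, with the convention that it is `0` when `G_μ⁻¹(v) = −∞`. -/
noncomputable def nGinv (μ n : MeasureTheory.Measure ℝ) (v : ℝ≥0∞) : ℝ≥0∞ :=
  if (GinvSet μ n v).Nonempty then n (Set.Iic (sSup (GinvSet μ n v))) else 0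

/-- The integrand `[n([s,∞)) · (1 + μ̄(s) − μ̄(G_μ⁻¹(D_μ(s))))]⁻¹` of `ψ₊`. -/
noncomputable def psiPlusIntegrand (μ n : MeasureTheory.Measure ℝ) (s : ℝ) : ℝ≥0∞ :=
  (n (Set.Ici s) *
    ENNReal.ofReal (1 + (μ (Set.Ici s)).toReal - mubarGinv μ n (Dmu μ n s)))⁻¹

/-- `ψ₊(y) = ∫_{[0,y]} [n([s,∞)) · (1 + μ̄(s) − μ̄(G_μ⁻¹(D_μ(s))))]⁻¹ dμ(s)`. -/
noncomputable def psiPlus (μ n : MeasureTheory.Measure ℝ) (y : ℝ) : ℝ≥0∞ :=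
  ∫⁻ s in Set.Icc (0 : ℝ) y, psiPlusIntegrand μ n s ∂μ

/-- The integrand `[n((−∞,s]) · (1 + μ̄(D_μ⁻¹(G_μ(s))) − μ̄(s))]⁻¹` of `ψ₋`. -/
noncomputable def psiMinusIntegrand (μ n : MeasureTheory.Measure ℝ) (s : ℝ) : ℝ≥0∞ :=
  (n (Set.Iic s) *
    ENNReal.ofReal (1 + mubarDinv μ n (Gmu μ n s) - (μ (Set.Ici s)).toReal))⁻¹

/-- `ψ₋(z) = ∫_{[−z,0]} [n((−∞,s]) · (1 + μ̄(D_μ⁻¹(G_μ(s))) − μ̄(s))]⁻¹ dμ(s)`. -/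
noncomputable def psiMinus (μ n : MeasureTheory.Measure ℝ) (z : ℝ) : ℝ≥0∞ :=
  ∫⁻ s in Set.Icc (-z) (0 : ℝ), psiMinusIntegrand μ n s ∂μ

/-- The set `{y ≥ 0 : ψ₊(y) ≥ l}` whose infimum is the left-continuous inverse `φ₊(l)`. -/
def phiPlusSet (μ n : MeasureTheory.Measure ℝ) (l : ℝ) : Set ℝ :=
  {y : ℝ | 0 ≤ y ∧ ENNReal.ofReal l ≤ psiPlus μ n y}

/-- The set `{z ≥ 0 : ψ₋(z) ≥ l}` whose infimum is the left-continuous inverse `φ₋(l)`. -/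
def phiMinusSet (μ n : MeasureTheory.Measure ℝ) (l : ℝ) : Set ℝ :=
  {z : ℝ | 0 ≤ z ∧ ENNReal.ofReal l ≤ psiMinus μ n z}

/-- `φ₊(l) = inf{y ≥ 0 : ψ₊(y) ≥ l}`. -/
noncomputable def phiPlus (μ n : MeasureTheory.Measure ℝ) (l : ℝ) : ℝ :=
  sInf (phiPlusSet μ n l)

/-- `φ₋(l) = inf{z ≥ 0 : ψ₋(z) ≥ l}`. -/
noncomputable def phiMinus (μ n : MeasureTheory.Measure ℝ) (l : ℝ) : ℝ :=
  sInf (phiMinusSet μ n l)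

/-- `n([φ₊(l),∞))`, with the convention that it is `0` when `φ₊(l) = inf ∅ = ∞`. -/
noncomputable def nPhiPlus (μ n : MeasureTheory.Measure ℝ) (l : ℝ) : ℝ≥0∞ :=
  if (phiPlusSet μ n l).Nonempty then n (Set.Ici (phiPlus μ n l)) else 0

/-- `n((−∞,−φ₋(l)])`, with the convention that it is `0` when `φ₋(l) = inf ∅ = ∞`. -/
noncomputable def nPhiMinus (μ n : MeasureTheory.Measure ℝ) (l : ℝ) : ℝ≥0∞ :=
  if (phiMinusSet μ n l).Nonempty then n (Set.Iic (-(phiMinus μ n l))) else 0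

/-- `∫₀^L [n((−∞,−φ₋(s)]) + n([φ₊(s),∞))] ds` for an upper limit `L ∈ [0,∞]`. -/
noncomputable def cutInt (μ n : MeasureTheory.Measure ℝ) (L : ℝ≥0∞) : ℝ≥0∞ :=
  ∫⁻ s in {s : ℝ | 0 < s ∧ ENNReal.ofReal s < L},
    (nPhiMinus μ n s + nPhiPlus μ n s)

/-- `exp(−a)` for `a ∈ [0,∞]`, with `exp(−∞) = 0`. -/
noncomputable def expNegE (a : ℝ≥0∞) : ℝ :=
  if a = ⊤ then 0 else Real.exp (-a.toReal)

/-- `ρ(l) = exp(−∫₀^l [n((−∞,−φ₋(s)]) + n([φ₊(s),∞))] ds)`. -/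
noncomputable def rho (μ n : MeasureTheory.Measure ℝ) (l : ℝ) : ℝ≥0∞ :=
  ENNReal.ofReal (expNegE (cutInt μ n (ENNReal.ofReal l)))

open Set

private lemma exists_div_lt {d : ℝ} (hd : 0 < d) : ∃ k : ℕ, 1 / ((k:ℝ) + 1) < d := by
  obtain ⟨k, hk⟩ := exists_nat_gt (1 / d)
  refine ⟨k, ?_⟩
  have hk1 : 1 / d < (k:ℝ) + 1 := hk.trans (by linarith)
  have h2 : 1 / ((k:ℝ) + 1) < 1 / (1 / d) :=
    one_div_lt_one_div_of_lt (by positivity) hk1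
  rwa [one_div_one_div] at h2

lemma lemA (ρ : MeasureTheory.Measure ℝ) (hatom : ∀ x : ℝ, ρ {x} = 0)
    (w : ℝ → ℝ≥0∞) (hw : Measurable w) (F : ℝ → ℝ≥0∞) (hF : Measurable F) (y : ℝ)
    (hfin : (∫⁻ s in Set.Icc 0 y, w s ∂ρ) ≠ ⊤) :
    (∫⁻ s in Set.Icc 0 y, w s * F ((∫⁻ u in Set.Icc 0 s, w u ∂ρ).toReal) ∂ρ) =
      ∫⁻ t in Set.Ico 0 (∫⁻ s in Set.Icc 0 y, w s ∂ρ).toReal, F t ∂volume := by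
  set ν : Measure ℝ := ρ.withDensity w with hν
  have hνapp : ∀ s : Set ℝ, MeasurableSet s → ν s = ∫⁻ u in s, w u ∂ρ :=
    fun s hs => withDensity_apply w hs
  have hνIcc : ∀ s : ℝ, ν (Icc 0 s) = ∫⁻ u in Icc 0 s, w u ∂ρ :=
    fun s => hνapp _ measurableSet_Icc
  have hνatom : ∀ x : ℝ, ν {x} = 0 := by
    intro x
    rw [hνapp _ (measurableSet_singleton x), setLIntegral_measure_zero _ _ (hatom x)]
  have hνy : ν (Icc 0 y) ≠ ⊤ := by rw [hνIcc]; exact hfin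
  have hΦmono : Monotone fun s => ν (Icc 0 s) := fun a b hab =>
    measure_mono (Icc_subset_Icc le_rfl hab)
  have hT : Measurable fun s => (ν (Icc 0 s)).toReal :=
    ENNReal.measurable_toReal.comp hΦmono.measurable
  set T : ℝ → ℝ := fun s => (ν (Icc 0 s)).toReal with hTdef
  set L : ℝ := (ν (Icc 0 y)).toReal with hL
  set m : Measure ℝ := ν.restrict (Icc 0 y) with hm
  have hmfin : IsFiniteMeasure m :=
    ⟨by rw [hm, Measure.restrict_apply_univ]; exact lt_top_iff_ne_top.2 hνy⟩
  have hkey : Measure.map T m = volume.restrict (Ico 0 L) := by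
    have : IsFiniteMeasure (Measure.map T m) := by
      constructor
      rw [Measure.map_apply hT MeasurableSet.univ]
      exact (measure_mono (subset_univ _)).trans_lt
        (by rw [hm, Measure.restrict_apply_univ]; exact lt_top_iff_ne_top.2 hνy)
    apply Measure.ext_of_Iic
    intro a
    rw [Measure.map_apply hT measurableSet_Iic, hm,
      Measure.restrict_apply (hT measurableSet_Iic),
      Measure.restrict_apply measurableSet_Iic]
    have hL0 : 0 ≤ L := ENNReal.toReal_nonneg
    rcases lt_or_ge a 0 with ha | ha
    · -- a < 0 : both sides zero
      have h1 : T ⁻¹' Iic a ∩ Icc 0 y = ∅ := by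
        apply eq_empty_iff_forall_notMem.2
        rintro s ⟨hs, -⟩
        rw [mem_preimage, mem_Iic] at hs
        exact absurd (le_trans ENNReal.toReal_nonneg hs) (not_le.2 ha)
      have h2 : Iic a ∩ Ico 0 L = ∅ := by
        apply eq_empty_iff_forall_notMem.2
        rintro s ⟨hs1, hs2, -⟩
        rw [mem_Iic] at hs1
        exact absurd (le_trans hs2 hs1) (not_le.2 ha)
      rw [h1, h2, measure_empty, measure_empty]
    rcases le_or_gt L a with hLa | haL
    · -- a ≥ L : both sides equal full mass
      have h1 : T ⁻¹' Iic a ∩ Icc 0 y = Icc 0 y := by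
        apply inter_eq_self_of_subset_right
        intro s hs
        rw [mem_preimage, mem_Iic]
        calc T s ≤ L := ENNReal.toReal_mono hνy (hΦmono hs.2)
        _ ≤ a := hLa
      have h2 : Iic a ∩ Ico 0 L = Ico 0 L := by
        apply inter_eq_self_of_subset_right
        intro s hs
        exact le_of_lt (hs.2.trans_le hLa)
      rw [h1, h2, Real.volume_Ico, hL, sub_zero, ENNReal.ofReal_toReal hνy]
    · -- 0 ≤ a < L
      set S : Set ℝ := {s | s ∈ Icc 0 y ∧ ENNReal.ofReal a < ν (Icc 0 s)} with hS
      have hyS : y ∈ S := by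
        refine ⟨⟨?_, le_rfl⟩, ?_⟩
        · by_contra hy0
          push_neg at hy0
          have h0 : ν (Icc 0 y) = 0 := by
            rw [Icc_eq_empty (not_le.2 hy0), measure_empty]
          have : L = 0 := by rw [hL, h0]; simp
          linarith
        · exact (ENNReal.ofReal_lt_iff_lt_toReal ha hνy).2 haL
      have hSne : S.Nonempty := ⟨y, hyS⟩
      have hSbdd : BddBelow S := ⟨0, fun s hs => hs.1.1⟩
      set c : ℝ := sInf S with hc
      have hc0 : 0 ≤ c := le_csInf hSne fun s hs => hs.1.1
      have hcy : c ≤ y := csInf_le hSbdd hyS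
      -- (i) ν (Icc 0 c) ≤ ofReal a
      have hle : ν (Icc 0 c) ≤ ENNReal.ofReal a := by
        rcases eq_or_lt_of_le hc0 with hc0' | hc0'
        · rw [← hc0', Icc_self, hνatom]; exact zero_le
        · have hIco : Ico 0 c = ⋃ k : ℕ, Icc 0 (c - c / (k + 1)) := by
            ext u
            simp only [mem_Ico, mem_iUnion, mem_Icc]
            constructor
            · rintro ⟨hu0, huc⟩
              have hcu : 0 < c - u := sub_pos.2 huc
              obtain ⟨k, hk⟩ := exists_div_lt (div_pos hcu hc0')
              refine ⟨k, hu0, ?_⟩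
              have h2 : c * (1 / ((k:ℝ)+1)) < c * ((c - u) / c) :=
                mul_lt_mul_of_pos_left hk hc0'
              have h3 : c * ((c - u) / c) = c - u := by field_simp
              have h4 : c * (1 / ((k:ℝ)+1)) = c / ((k:ℝ)+1) := by ring
              rw [h3, h4] at h2
              linarith
            · rintro ⟨k, hu0, hu1⟩
              have : 0 < c / ((k : ℝ) + 1) := by positivity
              exact ⟨hu0, by linarith⟩
          have hdir : Monotone fun k : ℕ => Icc (0:ℝ) (c - c / (k + 1)) := by
            intro j k hjk
            apply Icc_subset_Icc le_rfl
            have hjk' : ((j : ℝ) + 1) ≤ ((k : ℝ) + 1) := by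
              have := (Nat.cast_le (α := ℝ)).2 hjk
              linarith
            have : c / ((k : ℝ) + 1) ≤ c / ((j : ℝ) + 1) :=
              div_le_div_of_nonneg_left (le_of_lt hc0') (by positivity) hjk'
            linarith
          have h1 : ν (Icc 0 c) = ν (Ico 0 c) := by
            rw [← Ico_union_right hc0, measure_union
              (Set.disjoint_singleton_right.2 (fun h => absurd h.2 (lt_irrefl c)))
              (measurableSet_singleton c), hνatom c, add_zero]
          rw [h1, hIco, (hdir.directed_le).measure_iUnion]
          apply iSup_le
          intro k
          by_contra hgt
          push_neg at hgt
          have hds : c / ((k:ℝ) + 1) ≤ c := by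
            apply div_le_self (le_of_lt hc0')
            have : (0:ℝ) ≤ (k:ℝ) := Nat.cast_nonneg k
            linarith
          have hnn : (0:ℝ) ≤ c - c / ((k:ℝ) + 1) := by linarith
          have hub : c - c / ((k:ℝ) + 1) ≤ y := by
            have hdiv : (0:ℝ) ≤ c / ((k:ℝ)+1) := by positivity
            linarith
          have hmem : c - c / ((k : ℝ) + 1) ∈ S := ⟨⟨hnn, hub⟩, hgt⟩
          have hge := csInf_le hSbdd hmem
          rw [← hc] at hge
          have hpos : 0 < c / ((k : ℝ) + 1) := by positivity
          linarith
      -- (ii) ofReal a ≤ ν (Icc 0 c)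
      have hge : ENNReal.ofReal a ≤ ν (Icc 0 c) := by
        set A : ℕ → Set ℝ := fun k => Icc 0 (min y (c + 1 / (k + 1))) with hA
        have hiA : ⋂ k, A k = Icc 0 c := by
          ext u
          simp only [hA, mem_iInter, mem_Icc, le_min_iff]
          constructor
          · intro h
            refine ⟨(h 0).1, ?_⟩
            by_contra hu
            push_neg at hu
            have h1 : (0:ℝ) < u - c := sub_pos.2 hu
            obtain ⟨k, hk⟩ := exists_div_lt h1
            have h2 := (h k).2.2
            linarith
          · rintro ⟨h0, h1⟩ k
            have : (0:ℝ) < 1 / ((k:ℝ)+1) := by positivity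
            exact ⟨h0, le_trans h1 hcy, by linarith⟩
        have hanti : Directed (· ⊇ ·) A := by
          apply Antitone.directed_ge
          intro j k hjk
          apply Icc_subset_Icc le_rfl
          apply min_le_min le_rfl
          have hjk' : ((j : ℝ) + 1) ≤ ((k : ℝ) + 1) := by
            have := (Nat.cast_le (α := ℝ)).2 hjk
            linarith
          have : 1 / ((k:ℝ) + 1) ≤ 1 / ((j:ℝ) + 1) :=
            div_le_div_of_nonneg_left one_pos.le (by positivity) hjk'
          linarith
        have hfinA : ∃ k, ν (A k) ≠ ⊤ := by
          refine ⟨0, ?_⟩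
          exact ne_top_of_le_ne_top hνy (measure_mono (Icc_subset_Icc le_rfl (min_le_left _ _)))
        have heq : ν (⋂ k, A k) = ⨅ k, ν (A k) :=
          hanti.measure_iInter (fun k => measurableSet_Icc.nullMeasurableSet) hfinA
        rw [← hiA, heq]
        apply le_iInf
        intro k
        have hck : c < c + 1 / ((k:ℝ)+1) := by
          have : (0:ℝ) < 1 / ((k:ℝ)+1) := by positivity
          linarith
        obtain ⟨u, huS, huk⟩ := exists_lt_of_csInf_lt hSne (by rw [← hc]; exact hck)
        have hsub : Icc 0 u ⊆ A k := by
          apply Icc_subset_Icc le_rfl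
          exact le_min huS.1.2 (le_of_lt huk)
        exact le_trans (le_of_lt huS.2) (measure_mono hsub)
      have hΦc : ν (Icc 0 c) = ENNReal.ofReal a := le_antisymm hle hge
      -- preimage identity
      have h1 : T ⁻¹' Iic a ∩ Icc 0 y = Icc 0 c := by
        ext s
        simp only [mem_inter_iff, mem_preimage, mem_Iic, mem_Icc]
        constructor
        · rintro ⟨hTs, hs0, hsy⟩
          refine ⟨hs0, ?_⟩
          by_contra hcs
          push_neg at hcs
          obtain ⟨u, huS, hus⟩ := exists_lt_of_csInf_lt hSne (by rw [← hc]; exact hcs)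
          have : ENNReal.ofReal a < ν (Icc 0 s) :=
            lt_of_lt_of_le huS.2 (hΦmono (le_of_lt hus))
          have : a < T s :=
            (ENNReal.ofReal_lt_iff_lt_toReal ha (ne_top_of_le_ne_top hνy (hΦmono hsy))).1 this
          linarith
        · rintro ⟨hs0, hsc⟩
          have hfs : ν (Icc 0 s) ≠ ⊤ :=
            ne_top_of_le_ne_top hνy (hΦmono (le_trans hsc hcy))
          refine ⟨?_, hs0, le_trans hsc hcy⟩
          have : ν (Icc 0 s) ≤ ENNReal.ofReal a := le_trans (hΦmono hsc) hle
          exact ENNReal.toReal_le_of_le_ofReal ha this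
      have h2 : Iic a ∩ Ico 0 L = Icc 0 a := by
        ext s
        simp only [mem_inter_iff, mem_Iic, mem_Ico, mem_Icc]
        constructor
        · rintro ⟨h1', h2', _⟩; exact ⟨h2', h1'⟩
        · rintro ⟨h1', h2'⟩; exact ⟨h2', h1', lt_of_le_of_lt h2' haL⟩
      rw [h1, h2, hΦc, Real.volume_Icc, sub_zero]
  -- conclude
  have hcomp : Measurable fun s => F (T s) := hF.comp hT
  calc (∫⁻ s in Set.Icc 0 y, w s * F ((∫⁻ u in Set.Icc 0 s, w u ∂ρ).toReal) ∂ρ)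
      = ∫⁻ s in Icc 0 y, w s * F (T s) ∂ρ := by
        apply lintegral_congr
        intro s
        rw [← hνIcc s]
    _ = ∫⁻ s, F (T s) ∂m := by
        rw [hm, hν, restrict_withDensity measurableSet_Icc,
          lintegral_withDensity_eq_lintegral_mul _ hw hcomp]
        rfl
    _ = ∫⁻ t, F t ∂(Measure.map T m) := (lintegral_map hF hT).symm
    _ = ∫⁻ t in Ico 0 L, F t ∂volume := by rw [hkey]
    _ = ∫⁻ t in Ico 0 (∫⁻ s in Icc 0 y, w s ∂ρ).toReal, F t ∂volume := by
        rw [hL, hνIcc]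



lemma measSupport_isClosed (μ : MeasureTheory.Measure ℝ) : IsClosed (measSupport μ) := by
  rw [← isOpen_compl_iff, isOpen_iff_mem_nhds]
  intro x hx
  simp only [measSupport, mem_compl_iff, mem_setOf_eq, not_forall] at hx
  obtain ⟨U, hU, hxU, hμU⟩ := hx
  refine Filter.mem_of_superset (hU.mem_nhds hxU) ?_
  intro t ht
  simp only [measSupport, mem_compl_iff, mem_setOf_eq, not_forall]
  exact ⟨U, hU, ht, hμU⟩

lemma measSupport_compl_null (μ : MeasureTheory.Measure ℝ) : μ ((measSupport μ)ᶜ) = 0 := by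
  have hsub : (measSupport μ)ᶜ ⊆
      ⋃ p : ℚ × ℚ, if μ (Ioo (p.1:ℝ) (p.2:ℝ)) = 0 then Ioo (p.1:ℝ) (p.2:ℝ) else ∅ := by
    intro x hx
    simp only [measSupport, mem_compl_iff, mem_setOf_eq, not_forall] at hx
    obtain ⟨U, hU, hxU, hμU⟩ := hx
    have hμU0 : μ U = 0 := by
      by_contra h
      exact hμU (pos_iff_ne_zero.2 h)
    obtain ⟨l, u, hxlu, hluU⟩ := mem_nhds_iff_exists_Ioo_subset.1 (hU.mem_nhds hxU)
    obtain ⟨q, hq1, hq2⟩ := exists_rat_btwn hxlu.1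
    obtain ⟨r, hr1, hr2⟩ := exists_rat_btwn hxlu.2
    refine mem_iUnion.2 ⟨(q, r), ?_⟩
    have hsub2 : Ioo (q:ℝ) (r:ℝ) ⊆ U := fun t ht => hluU ⟨hq1.trans ht.1, ht.2.trans hr2⟩
    have h0 : μ (Ioo (q:ℝ) (r:ℝ)) = 0 := measure_mono_null hsub2 hμU0
    rw [if_pos h0]
    exact ⟨hq2, hr1⟩
  refine measure_mono_null hsub (measure_iUnion_null ?_)
  intro p
  split_ifs with h
  · exact h
  · exact measure_empty

lemma Dmu_ne_top (μ n : MeasureTheory.Measure ℝ) [MeasureTheory.IsProbabilityMeasure μ]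
    (hnsupp : ∀ x ∈ measSupport μ, 0 < n (Set.Iic x) ∧ 0 < n (Set.Ici x)) (y : ℝ) :
    Dmu μ n y ≠ ⊤ := by
  by_cases hne : (measSupport μ ∩ Icc 0 y).Nonempty
  · set b := sSup (measSupport μ ∩ Icc 0 y) with hb
    have hbmem : b ∈ measSupport μ ∩ Icc 0 y :=
      IsClosed.csSup_mem ((measSupport_isClosed μ).inter isClosed_Icc) hne
        ⟨y, fun s hs => hs.2.2⟩
    have hsplit : Icc (0:ℝ) y = Icc 0 b ∪ Ioc b y :=
      (Icc_union_Ioc_eq_Icc hbmem.2.1 hbmem.2.2).symm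
    rw [Dmu, hsplit]
    have hle := lintegral_union_le (μ := μ) (fun s => (n (Ici s))⁻¹) (Icc (0:ℝ) b) (Ioc b y)
    apply ne_top_of_le_ne_top _ hle
    have h2 : μ (Ioc b y) = 0 := by
      apply measure_mono_null _ (measSupport_compl_null μ)
      intro u hu humem
      have : u ∈ measSupport μ ∩ Icc 0 y := ⟨humem, le_trans hbmem.2.1 hu.1.le, hu.2⟩
      exact absurd (le_csSup ⟨y, fun s hs => hs.2.2⟩ this) (not_le.2 hu.1)
    rw [setLIntegral_measure_zero _ _ h2, add_zero]
    have h1 : ∫⁻ s in Icc 0 b, (n (Ici s))⁻¹ ∂μ ≤ (n (Ici b))⁻¹ * μ (Icc 0 b) := by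
      rw [← setLIntegral_const]
      apply setLIntegral_mono measurable_const
      intro s hs
      exact ENNReal.inv_le_inv' (measure_mono (Ici_subset_Ici.2 hs.2))
    apply ne_top_of_le_ne_top _ h1
    exact ENNReal.mul_ne_top (ENNReal.inv_ne_top.2 (ne_of_gt (hnsupp b hbmem.1).2))
      (measure_ne_top μ _)
  · have h0 : μ (Icc (0:ℝ) y) = 0 := by
      apply measure_mono_null _ (measSupport_compl_null μ)
      intro u hu humem
      exact hne ⟨u, humem, hu⟩
    rw [Dmu, setLIntegral_measure_zero _ _ h0]
    exact ENNReal.zero_ne_top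

lemma Gmu_ne_top (μ n : MeasureTheory.Measure ℝ) [MeasureTheory.IsProbabilityMeasure μ]
    (hnsupp : ∀ x ∈ measSupport μ, 0 < n (Set.Iic x) ∧ 0 < n (Set.Ici x)) (x : ℝ) :
    Gmu μ n x ≠ ⊤ := by
  by_cases hne : (measSupport μ ∩ Icc x 0).Nonempty
  · set b := sInf (measSupport μ ∩ Icc x 0) with hb
    have hbmem : b ∈ measSupport μ ∩ Icc x 0 :=
      IsClosed.csInf_mem ((measSupport_isClosed μ).inter isClosed_Icc) hne
        ⟨x, fun s hs => hs.2.1⟩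
    have hsplit : Icc x (0:ℝ) = Ico x b ∪ Icc b 0 :=
      (Ico_union_Icc_eq_Icc hbmem.2.1 hbmem.2.2).symm
    rw [Gmu, hsplit]
    have hle := lintegral_union_le (μ := μ) (fun s => (n (Iic s))⁻¹) (Ico x b) (Icc b (0:ℝ))
    apply ne_top_of_le_ne_top _ hle
    have h2 : μ (Ico x b) = 0 := by
      apply measure_mono_null _ (measSupport_compl_null μ)
      intro u hu humem
      have : u ∈ measSupport μ ∩ Icc x 0 := ⟨humem, hu.1, le_trans hu.2.le hbmem.2.2⟩
      exact absurd (csInf_le ⟨x, fun s hs => hs.2.1⟩ this) (not_le.2 hu.2)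
    rw [setLIntegral_measure_zero _ _ h2, zero_add]
    have h1 : ∫⁻ s in Icc b 0, (n (Iic s))⁻¹ ∂μ ≤ (n (Iic b))⁻¹ * μ (Icc b (0:ℝ)) := by
      rw [← setLIntegral_const]
      apply setLIntegral_mono measurable_const
      intro s hs
      exact ENNReal.inv_le_inv' (measure_mono (Iic_subset_Iic.2 hs.1))
    apply ne_top_of_le_ne_top _ h1
    exact ENNReal.mul_ne_top (ENNReal.inv_ne_top.2 (ne_of_gt (hnsupp b hbmem.1).1))
      (measure_ne_top μ _)
  · have h0 : μ (Icc x (0:ℝ)) = 0 := by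
      apply measure_mono_null _ (measSupport_compl_null μ)
      intro u hu humem
      exact hne ⟨u, humem, hu⟩
    rw [Gmu, setLIntegral_measure_zero _ _ h0]
    exact ENNReal.zero_ne_top



lemma Dmu_mono (μ n : MeasureTheory.Measure ℝ) : Monotone (Dmu μ n) :=
  fun a b hab => lintegral_mono_set (Icc_subset_Icc le_rfl hab)

lemma Gmu_anti (μ n : MeasureTheory.Measure ℝ) : Antitone (Gmu μ n) :=
  fun a b hab => lintegral_mono_set (Icc_subset_Icc hab le_rfl)

lemma meas_wplus (n : MeasureTheory.Measure ℝ) : Measurable fun s : ℝ => (n (Ici s))⁻¹ := by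
  have h : Antitone fun s : ℝ => n (Ici s) := fun a b hab =>
    measure_mono (Ici_subset_Ici.2 hab)
  exact h.measurable.inv

lemma meas_wminus (n : MeasureTheory.Measure ℝ) : Measurable fun s : ℝ => (n (Iic s))⁻¹ := by
  have h : Monotone fun s : ℝ => n (Iic s) := fun a b hab =>
    measure_mono (Iic_subset_Iic.2 hab)
  exact h.measurable.inv

lemma mubarDinv_anti (μ n : MeasureTheory.Measure ℝ) [MeasureTheory.IsProbabilityMeasure μ] :
    Antitone (mubarDinv μ n) := by
  intro v v' h
  unfold mubarDinv
  by_cases h' : (DinvSet μ n v').Nonempty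
  · have hsub : DinvSet μ n v' ⊆ DinvSet μ n v :=
      fun u hu => ⟨hu.1, lt_of_le_of_lt h hu.2⟩
    have hne : (DinvSet μ n v).Nonempty := h'.mono hsub
    rw [if_pos h', if_pos hne]
    have hinf : sInf (DinvSet μ n v) ≤ sInf (DinvSet μ n v') :=
      csInf_le_csInf ⟨0, fun u hu => hu.1⟩ h' hsub
    exact ENNReal.toReal_mono (measure_ne_top μ _)
      (measure_mono (Ici_subset_Ici.2 hinf))
  · rw [if_neg h']
    split_ifs
    · exact ENNReal.toReal_nonneg
    · exact le_rfl

lemma mubarGinv_mono (μ n : MeasureTheory.Measure ℝ) [MeasureTheory.IsProbabilityMeasure μ] :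
    Monotone (mubarGinv μ n) := by
  intro v v' h
  unfold mubarGinv
  by_cases h' : (GinvSet μ n v').Nonempty
  · have hsub : GinvSet μ n v' ⊆ GinvSet μ n v :=
      fun u hu => ⟨hu.1, lt_of_le_of_lt h hu.2⟩
    have hne : (GinvSet μ n v).Nonempty := h'.mono hsub
    rw [if_pos h', if_pos hne]
    have hsup : sSup (GinvSet μ n v') ≤ sSup (GinvSet μ n v) :=
      csSup_le_csSup ⟨0, fun u hu => hu.1⟩ h' hsub
    exact ENNReal.toReal_mono (measure_ne_top μ _)
      (measure_mono (Ici_subset_Ici.2 hsup))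
  · rw [if_neg h']
    split_ifs
    · calc (μ (Ici (sSup (GinvSet μ n v)))).toReal
          ≤ (μ univ).toReal := ENNReal.toReal_mono (measure_ne_top μ _)
            (measure_mono (subset_univ _))
        _ = 1 := by rw [measure_univ, ENNReal.toReal_one]
    · exact le_rfl

lemma claimBplus (μ n : MeasureTheory.Measure ℝ) [MeasureTheory.IsProbabilityMeasure μ]
    (hatomless : ∀ x : ℝ, μ {x} = 0)
    (hnfin : ∀ s : ℝ, 0 < s → n (Set.Ici s) < ⊤ ∧ n (Set.Iic (-s)) < ⊤)
    (hnsupp : ∀ x ∈ measSupport μ, 0 < n (Set.Iic x) ∧ 0 < n (Set.Ici x))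
    (s : ℝ) (hs : 0 < s) :
    mubarDinv μ n (Dmu μ n s) = (μ (Set.Ici s)).toReal := by
  have hDadd : ∀ y, s ≤ y →
      Dmu μ n y = Dmu μ n s + ∫⁻ u in Ioc s y, (n (Ici u))⁻¹ ∂μ := by
    intro y hy
    rw [Dmu, Dmu, ← Icc_union_Ioc_eq_Icc (le_of_lt hs) hy,
      lintegral_union measurableSet_Ioc]
    rw [Set.disjoint_left]
    intro u hu hu'
    exact absurd hu.2 (not_le.2 hu'.1)
  have hIocpos : ∀ y, s < y → μ (Ioc s y) ≠ 0 → Dmu μ n s < Dmu μ n y := by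
    intro y hy hpos2
    rw [hDadd y hy.le]
    apply ENNReal.lt_add_right (Dmu_ne_top μ n hnsupp s)
    intro h0
    rw [lintegral_eq_zero_iff (meas_wplus n)] at h0
    have h1 : (μ.restrict (Ioc s y)) {u : ℝ | ¬ (n (Ici u))⁻¹ = 0} = 0 := by
      have := h0
      rw [Filter.EventuallyEq, ae_iff] at this
      simpa using this
    rw [Measure.restrict_apply] at h1
    · have heq : {u : ℝ | ¬ (n (Ici u))⁻¹ = 0} ∩ Ioc s y = Ioc s y := by
        apply inter_eq_self_of_subset_right
        intro u hu
        simp only [mem_setOf_eq]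
        exact ENNReal.inv_ne_zero.2 (ne_of_lt (hnfin u (hs.trans hu.1)).1)
      rw [heq] at h1
      exact hpos2 h1
    · exact meas_wplus n (measurableSet_singleton 0).compl
  by_cases hpos : μ (Ioi s) = 0
  · -- empty case
    have hempty : ¬ (DinvSet μ n (Dmu μ n s)).Nonempty := by
      rintro ⟨u, hu0, hult⟩
      rcases le_or_gt u s with h | h
      · exact absurd (Dmu_mono μ n h) (not_le.2 hult)
      · have : Dmu μ n u = Dmu μ n s := by
          rw [hDadd u h.le, setLIntegral_measure_zero _ _
            (measure_mono_null Ioc_subset_Ioi_self hpos), add_zero]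
        rw [this] at hult
        exact lt_irrefl _ hult
    rw [mubarDinv, if_neg hempty]
    have h0 : μ (Ici s) = 0 := by
      have hle : μ (Ici s) ≤ μ {s} + μ (Ioi s) := by
        refine le_trans (measure_mono ?_) (measure_union_le _ _)
        intro u hu
        rcases eq_or_lt_of_le (mem_Ici.1 hu) with h | h
        · exact Or.inl h.symm
        · exact Or.inr h
      rw [hatomless s, hpos, add_zero] at hle
      exact le_antisymm hle zero_le
    rw [h0, ENNReal.toReal_zero]
  · -- nonempty case
    have hIoi : Ioi s = ⋃ k : ℕ, Ioc s (s + k + 1) := by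
      ext u
      simp only [mem_Ioi, mem_iUnion, mem_Ioc]
      constructor
      · intro hu
        obtain ⟨k, hk⟩ := exists_nat_ge (u - s - 1)
        exact ⟨k, hu, by linarith⟩
      · rintro ⟨k, hu, -⟩
        exact hu
    have hdir : Monotone fun k : ℕ => Ioc s (s + k + 1) := by
      intro j k hjk
      apply Ioc_subset_Ioc le_rfl
      have := (Nat.cast_le (α := ℝ)).2 hjk
      linarith
    obtain ⟨k, hk⟩ : ∃ k : ℕ, μ (Ioc s (s + k + 1)) ≠ 0 := by
      by_contra hall
      push_neg at hall
      apply hpos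
      rw [hIoi, (hdir.directed_le).measure_iUnion]
      simp [hall]
    have hk0 : (0:ℝ) ≤ (k:ℝ) := Nat.cast_nonneg k
    have hne : (DinvSet μ n (Dmu μ n s)).Nonempty :=
      ⟨s + k + 1, by linarith, hIocpos _ (by linarith) hk⟩
    rw [mubarDinv, if_pos hne]
    set c := sInf (DinvSet μ n (Dmu μ n s)) with hc
    have hbdd : BddBelow (DinvSet μ n (Dmu μ n s)) := ⟨0, fun u hu => hu.1⟩
    have hsc : s ≤ c := by
      apply le_csInf hne
      intro u hu
      by_contra h
      push_neg at h
      exact absurd (Dmu_mono μ n h.le) (not_le.2 hu.2)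
    have hmid : μ (Ico s c) = 0 := by
      rcases eq_or_lt_of_le hsc with h | h
      · rw [← h, Ico_self, measure_empty]
      · have hIoo : μ (Ioo s c) = 0 := by
          by_contra hpos2
          have hIoo2 : Ioo s c = ⋃ k : ℕ, Ioc s (c - (c - s) / (k + 2)) := by
            ext u
            simp only [mem_Ioo, mem_iUnion, mem_Ioc]
            constructor
            · rintro ⟨hu1, hu2⟩
              have hcu : 0 < c - u := sub_pos.2 hu2
              have hcs : 0 < c - s := sub_pos.2 h
              obtain ⟨k, hk⟩ := exists_div_lt (div_pos hcu hcs)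
              refine ⟨k, hu1, ?_⟩
              have h2 : (c - s) * (1 / ((k:ℝ) + 1)) < (c - s) * ((c - u) / (c - s)) :=
                mul_lt_mul_of_pos_left hk hcs
              have h3 : (c - s) * ((c - u) / (c - s)) = c - u := by field_simp
              rw [h3] at h2
              have h4 : (c - s) / ((k:ℝ) + 2) ≤ (c - s) * (1 / ((k:ℝ) + 1)) := by
                rw [div_eq_mul_one_div]
                apply mul_le_mul_of_nonneg_left _ hcs.le
                apply div_le_div_of_nonneg_left one_pos.le (by positivity)
                linarith
              linarith
            · rintro ⟨k, hu1, hu2⟩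
              have hcs : 0 < c - s := sub_pos.2 h
              have : 0 < (c - s) / ((k:ℝ) + 2) := by positivity
              exact ⟨hu1, by linarith⟩
          have hdir2 : Monotone fun k : ℕ => Ioc s (c - (c - s) / (k + 2)) := by
            intro j k hjk
            apply Ioc_subset_Ioc le_rfl
            have hcs : 0 < c - s := sub_pos.2 h
            have hjk' : ((j:ℝ) + 2) ≤ ((k:ℝ) + 2) := by
              have := (Nat.cast_le (α := ℝ)).2 hjk
              linarith
            have := div_le_div_of_nonneg_left hcs.le (by positivity : (0:ℝ) < (j:ℝ)+2) hjk'
            linarith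
          obtain ⟨k, hk2⟩ : ∃ k : ℕ, μ (Ioc s (c - (c - s) / (k + 2))) ≠ 0 := by
            by_contra hall
            push_neg at hall
            apply hpos2
            rw [hIoo2, (hdir2.directed_le).measure_iUnion]
            simp [hall]
          have hcs : 0 < c - s := sub_pos.2 h
          have hub : s < c - (c - s) / ((k:ℝ) + 2) := by
            have h1 : (c - s) / ((k:ℝ) + 2) < c - s := by
              apply div_lt_self hcs
              have : (0:ℝ) ≤ (k:ℝ) := Nat.cast_nonneg k
              linarith
            linarith
          have hmem : c - (c - s) / ((k:ℝ) + 2) ∈ DinvSet μ n (Dmu μ n s) :=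
            ⟨le_of_lt (hs.trans hub), hIocpos _ hub hk2⟩
          have := csInf_le hbdd hmem
          rw [← hc] at this
          have : (0:ℝ) < (c - s) / ((k:ℝ) + 2) := by positivity
          linarith [csInf_le hbdd hmem]
        have hle : μ (Ico s c) ≤ μ {s} + μ (Ioo s c) := by
          refine le_trans (measure_mono ?_) (measure_union_le _ _)
          intro u hu
          rcases eq_or_lt_of_le hu.1 with h' | h'
          · exact Or.inl h'.symm
          · exact Or.inr ⟨h', hu.2⟩
        rw [hatomless s, hIoo, add_zero] at hle
        exact le_antisymm hle zero_le
    apply le_antisymm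
    · exact ENNReal.toReal_mono (measure_ne_top μ _) (measure_mono (Ici_subset_Ici.2 hsc))
    · apply ENNReal.toReal_mono (measure_ne_top μ _)
      calc μ (Ici s) ≤ μ (Ico s c) + μ (Ici c) := by
            refine le_trans (measure_mono ?_) (measure_union_le _ _)
            intro u hu
            rcases lt_or_ge u c with h' | h'
            · exact Or.inl ⟨hu, h'⟩
            · exact Or.inr h'
        _ = μ (Ici c) := by rw [hmid, zero_add]


lemma claimBminus (μ n : MeasureTheory.Measure ℝ) [MeasureTheory.IsProbabilityMeasure μ]
    (hatomless : ∀ x : ℝ, μ {x} = 0)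
    (hnfin : ∀ s : ℝ, 0 < s → n (Set.Ici s) < ⊤ ∧ n (Set.Iic (-s)) < ⊤)
    (hnsupp : ∀ x ∈ measSupport μ, 0 < n (Set.Iic x) ∧ 0 < n (Set.Ici x))
    (s : ℝ) (hs : s < 0) :
    mubarGinv μ n (Gmu μ n s) = (μ (Set.Ici s)).toReal := by
  have hnfin' : ∀ u : ℝ, u < 0 → n (Iic u) < ⊤ := by
    intro u hu
    have := (hnfin (-u) (by linarith)).2
    rwa [neg_neg] at this
  have hGadd : ∀ x, x ≤ s →
      Gmu μ n x = Gmu μ n s + ∫⁻ u in Ico x s, (n (Iic u))⁻¹ ∂μ := by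
    intro x hx
    rw [Gmu, Gmu, ← Ico_union_Icc_eq_Icc hx (le_of_lt hs),
      lintegral_union measurableSet_Icc, add_comm]
    rw [Set.disjoint_left]
    intro u hu hu'
    exact absurd hu'.1 (not_le.2 hu.2)
  have hIcopos : ∀ x, x < s → μ (Ico x s) ≠ 0 → Gmu μ n s < Gmu μ n x := by
    intro x hx hpos2
    rw [hGadd x hx.le]
    apply ENNReal.lt_add_right (Gmu_ne_top μ n hnsupp s)
    intro h0
    rw [lintegral_eq_zero_iff (meas_wminus n)] at h0
    have h1 : (μ.restrict (Ico x s)) {u : ℝ | ¬ (n (Iic u))⁻¹ = 0} = 0 := by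
      have := h0
      rw [Filter.EventuallyEq, ae_iff] at this
      simpa using this
    rw [Measure.restrict_apply] at h1
    · have heq : {u : ℝ | ¬ (n (Iic u))⁻¹ = 0} ∩ Ico x s = Ico x s := by
        apply inter_eq_self_of_subset_right
        intro u hu
        simp only [mem_setOf_eq]
        exact ENNReal.inv_ne_zero.2 (ne_of_lt (hnfin' u (hu.2.trans hs)))
      rw [heq] at h1
      exact hpos2 h1
    · exact meas_wminus n (measurableSet_singleton 0).compl
  by_cases hpos : μ (Iio s) = 0
  · -- empty case
    have hempty : ¬ (GinvSet μ n (Gmu μ n s)).Nonempty := by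
      rintro ⟨u, hu0, hult⟩
      rcases le_or_gt s u with h | h
      · exact absurd (Gmu_anti μ n h) (not_le.2 hult)
      · have : Gmu μ n u = Gmu μ n s := by
          rw [hGadd u h.le, setLIntegral_measure_zero _ _
            (measure_mono_null Ico_subset_Iio_self hpos), add_zero]
        rw [this] at hult
        exact lt_irrefl _ hult
    rw [mubarGinv, if_neg hempty]
    have h0 : μ (Ici s) = 1 := by
      have h1 : (1:ℝ≥0∞) = μ (Iio s ∪ Ici s) := by
        rw [Iio_union_Ici, measure_univ]
      have h2 : μ (Iio s ∪ Ici s) ≤ μ (Iio s) + μ (Ici s) := measure_union_le _ _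
      rw [hpos, zero_add] at h2
      exact le_antisymm prob_le_one (h1 ▸ h2)
    rw [h0, ENNReal.toReal_one]
  · -- nonempty case
    have hIio : Iio s = ⋃ k : ℕ, Ico (s - k - 1) s := by
      ext u
      simp only [mem_Iio, mem_iUnion, mem_Ico]
      constructor
      · intro hu
        obtain ⟨k, hk⟩ := exists_nat_ge (s - u - 1)
        exact ⟨k, by linarith, hu⟩
      · rintro ⟨k, -, hu⟩
        exact hu
    have hdir : Monotone fun k : ℕ => Ico (s - k - 1) s := by
      intro j k hjk
      apply Ico_subset_Ico _ le_rfl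
      have := (Nat.cast_le (α := ℝ)).2 hjk
      linarith
    obtain ⟨k, hk⟩ : ∃ k : ℕ, μ (Ico (s - k - 1) s) ≠ 0 := by
      by_contra hall
      push_neg at hall
      apply hpos
      rw [hIio, (hdir.directed_le).measure_iUnion]
      simp [hall]
    have hk0 : (0:ℝ) ≤ (k:ℝ) := Nat.cast_nonneg k
    have hne : (GinvSet μ n (Gmu μ n s)).Nonempty :=
      ⟨s - k - 1, by linarith, hIcopos _ (by linarith) hk⟩
    rw [mubarGinv, if_pos hne]
    set c := sSup (GinvSet μ n (Gmu μ n s)) with hc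
    have hbdd : BddAbove (GinvSet μ n (Gmu μ n s)) := ⟨0, fun u hu => hu.1⟩
    have hcs : c ≤ s := by
      apply csSup_le hne
      intro u hu
      by_contra h
      push_neg at h
      exact absurd (Gmu_anti μ n h.le) (not_le.2 hu.2)
    have hmid : μ (Ico c s) = 0 := by
      rcases eq_or_lt_of_le hcs with h | h
      · rw [h, Ico_self, measure_empty]
      · have hIoo : μ (Ioo c s) = 0 := by
          by_contra hpos2
          have hIoo2 : Ioo c s = ⋃ k : ℕ, Ico (c + (s - c) / (k + 2)) s := by
            ext u
            simp only [mem_Ioo, mem_iUnion, mem_Ico]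
            constructor
            · rintro ⟨hu1, hu2⟩
              have hcu : 0 < u - c := sub_pos.2 hu1
              have hcs' : 0 < s - c := sub_pos.2 h
              obtain ⟨k, hk'⟩ := exists_div_lt (div_pos hcu hcs')
              refine ⟨k, ?_, hu2⟩
              have h2 : (s - c) * (1 / ((k:ℝ) + 1)) < (s - c) * ((u - c) / (s - c)) :=
                mul_lt_mul_of_pos_left hk' hcs'
              have h3 : (s - c) * ((u - c) / (s - c)) = u - c := by field_simp
              rw [h3] at h2
              have h4 : (s - c) / ((k:ℝ) + 2) ≤ (s - c) * (1 / ((k:ℝ) + 1)) := by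
                rw [div_eq_mul_one_div]
                apply mul_le_mul_of_nonneg_left _ hcs'.le
                apply div_le_div_of_nonneg_left one_pos.le (by positivity)
                linarith
              linarith
            · rintro ⟨k, hu1, hu2⟩
              have hcs' : 0 < s - c := sub_pos.2 h
              have : 0 < (s - c) / ((k:ℝ) + 2) := by positivity
              exact ⟨by linarith, hu2⟩
          have hdir2 : Monotone fun k : ℕ => Ico (c + (s - c) / (k + 2)) s := by
            intro j k hjk
            apply Ico_subset_Ico _ le_rfl
            have hcs' : 0 < s - c := sub_pos.2 h
            have hjk' : ((j:ℝ) + 2) ≤ ((k:ℝ) + 2) := by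
              have := (Nat.cast_le (α := ℝ)).2 hjk
              linarith
            have := div_le_div_of_nonneg_left hcs'.le (by positivity : (0:ℝ) < (j:ℝ)+2) hjk'
            linarith
          obtain ⟨k, hk2⟩ : ∃ k : ℕ, μ (Ico (c + (s - c) / (k + 2)) s) ≠ 0 := by
            by_contra hall
            push_neg at hall
            apply hpos2
            rw [hIoo2, (hdir2.directed_le).measure_iUnion]
            simp [hall]
          have hcs' : 0 < s - c := sub_pos.2 h
          have hub : c + (s - c) / ((k:ℝ) + 2) < s := by
            have h1 : (s - c) / ((k:ℝ) + 2) < s - c := by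
              apply div_lt_self hcs'
              have : (0:ℝ) ≤ (k:ℝ) := Nat.cast_nonneg k
              linarith
            linarith
          have hmem : c + (s - c) / ((k:ℝ) + 2) ∈ GinvSet μ n (Gmu μ n s) :=
            ⟨le_of_lt (hub.trans hs), hIcopos _ hub hk2⟩
          have hle2 := le_csSup hbdd hmem
          rw [← hc] at hle2
          have : (0:ℝ) < (s - c) / ((k:ℝ) + 2) := by positivity
          linarith
        have hle : μ (Ico c s) ≤ μ {c} + μ (Ioo c s) := by
          refine le_trans (measure_mono ?_) (measure_union_le _ _)
          intro u hu
          rcases eq_or_lt_of_le hu.1 with h' | h'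
          · exact Or.inl h'.symm
          · exact Or.inr ⟨h', hu.2⟩
        rw [hatomless c, hIoo, add_zero] at hle
        exact le_antisymm hle zero_le
    apply le_antisymm
    · apply ENNReal.toReal_mono (measure_ne_top μ _)
      calc μ (Ici c) ≤ μ (Ico c s) + μ (Ici s) := by
            refine le_trans (measure_mono ?_) (measure_union_le _ _)
            intro u hu
            rcases lt_or_ge u s with h' | h'
            · exact Or.inl ⟨hu, h'⟩
            · exact Or.inr h'
        _ = μ (Ici s) := by rw [hmid, zero_add]
    · exact ENNReal.toReal_mono (measure_ne_top μ _) (measure_mono (Ici_subset_Ici.2 hcs))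

/-- Compatibility of the two branches: for every `z ≥ 0`,
`ψ₋(z) = ∫_{[0, D_μ⁻¹(G_μ(−z)))} [n([s,∞)) · (1 + μ̄(s) − μ̄(G_μ⁻¹(D_μ(s))))]⁻¹ dμ(s)`,
that is `ψ₋(z) = ψ₊(D_μ⁻¹(G_μ(−z)))`, where `ψ₊(∞)` denotes the integral of the
`ψ₊`-integrand over all of `[0,∞)` (case `D_μ⁻¹(G_μ(−z)) = ∞`, i.e. the set
`{y ≥ 0 : D_μ(y) > G_μ(−z)}` is empty). -/
theorem psiMinus_eq_psiPlus_comp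
    (μ n : MeasureTheory.Measure ℝ) [MeasureTheory.IsProbabilityMeasure μ]
    (hatomless : ∀ x : ℝ, μ {x} = 0)
    (hneg : 0 < μ (Set.Iio (0 : ℝ))) (hpos : 0 < μ (Set.Ioi (0 : ℝ)))
    (hnfin : ∀ s : ℝ, 0 < s → n (Set.Ici s) < ⊤ ∧ n (Set.Iic (-s)) < ⊤)
    (hnsupp : ∀ x ∈ measSupport μ, 0 < n (Set.Iic x) ∧ 0 < n (Set.Ici x))
    (hcompat : (⨆ y : ℝ, Dmu μ n y) = (⨆ x : ℝ, Gmu μ n x))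
    :
    ∀ z : ℝ, 0 ≤ z →
      psiMinus μ n z =
        ∫⁻ s in (if (DinvSet μ n (Gmu μ n (-z))).Nonempty
                 then Set.Ico (0 : ℝ) (sInf (DinvSet μ n (Gmu μ n (-z))))
                 else Set.Ici (0 : ℝ)),
          psiPlusIntegrand μ n s ∂μ := by
  intro z hz
  classical
  haveI : MeasureTheory.NullSingletonClass μ := ⟨hatomless⟩
  have hnfin' : ∀ u : ℝ, u < 0 → n (Iic u) < ⊤ := by
    intro u hu
    have := (hnfin (-u) (by linarith)).2
    rwa [neg_neg] at this
  set wp : ℝ → ℝ≥0∞ := fun s => (n (Ici s))⁻¹ with hwp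
  set wm : ℝ → ℝ≥0∞ := fun s => (n (Iic s))⁻¹ with hwm
  set F : ℝ → ℝ≥0∞ := fun t =>
    (ENNReal.ofReal (1 + mubarDinv μ n (ENNReal.ofReal t)
      - mubarGinv μ n (ENNReal.ofReal t)))⁻¹ with hFdef
  have hFmeas : Measurable F := by
    have h1 : Antitone fun t : ℝ => mubarDinv μ n (ENNReal.ofReal t) :=
      fun a b hab => mubarDinv_anti μ n (ENNReal.ofReal_le_ofReal hab)
    have h2 : Monotone fun t : ℝ => mubarGinv μ n (ENNReal.ofReal t) :=
      fun a b hab => mubarGinv_mono μ n (ENNReal.ofReal_le_ofReal hab)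
    exact (((measurable_const.add h1.measurable).sub h2.measurable).ennreal_ofReal).inv
  -- the positive-side key identity
  have key : ∀ y : ℝ,
      (∫⁻ s in Icc (0:ℝ) y, psiPlusIntegrand μ n s ∂μ)
        = ∫⁻ t in Ico (0:ℝ) (Dmu μ n y).toReal, F t ∂volume := by
    intro y
    have h1 : (∫⁻ s in Icc (0:ℝ) y, psiPlusIntegrand μ n s ∂μ)
        = ∫⁻ s in Icc (0:ℝ) y, wp s * F ((Dmu μ n s).toReal) ∂μ := by
      apply lintegral_congr_ae
      have hnull : μ.restrict (Icc (0:ℝ) y) {s : ℝ | ¬ 0 < s} = 0 := by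
        rw [Measure.restrict_apply]
        · apply measure_mono_null _ (hatomless 0)
          rintro u ⟨hu1, hu2, -⟩
          simp only [mem_setOf_eq, not_lt] at hu1
          simp [le_antisymm hu1 hu2]
        · have : {s : ℝ | ¬ 0 < s} = Iic 0 := by ext u; simp [not_lt]
          rw [this]; exact measurableSet_Iic
      have hmem : {s : ℝ | 0 < s} ∈ ae (μ.restrict (Icc (0:ℝ) y)) := by
        rw [mem_ae_iff, Set.compl_setOf]
        exact hnull
      filter_upwards [hmem] with s hs
      have hsp : (0:ℝ) < s := hs
      show psiPlusIntegrand μ n s = wp s * F ((Dmu μ n s).toReal)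
      rw [hFdef]
      simp only []
      rw [ENNReal.ofReal_toReal (Dmu_ne_top μ n hnsupp s),
        claimBplus μ n hatomless hnfin hnsupp s hsp, psiPlusIntegrand,
        ENNReal.mul_inv (Or.inr ENNReal.ofReal_ne_top)
          (Or.inl (ne_of_lt (hnfin s hsp).1))]
    rw [h1]
    have := lemA μ hatomless wp (meas_wplus n) F hFmeas y (Dmu_ne_top μ n hnsupp y)
    rw [show (∫⁻ s in Icc (0:ℝ) y, wp s ∂μ) = Dmu μ n y from rfl] at this
    rw [← this]
    exact lintegral_congr fun s => by
      rw [show (∫⁻ u in Icc (0:ℝ) s, wp u ∂μ) = Dmu μ n s from rfl]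
  -- the minus side
  set v : ℝ≥0∞ := Gmu μ n (-z) with hv
  have hvfin : v ≠ ⊤ := Gmu_ne_top μ n hnsupp (-z)
  have hminus : psiMinus μ n z = ∫⁻ t in Ico (0:ℝ) v.toReal, F t ∂volume := by
    have hg : Measurable fun x : ℝ => wm x * F ((Gmu μ n x).toReal) := by
      have hGanti : Antitone (Gmu μ n) := Gmu_anti μ n
      exact (meas_wminus n).mul
        (hFmeas.comp (ENNReal.measurable_toReal.comp hGanti.measurable))
    have h1 : psiMinus μ n z = ∫⁻ s in Icc (-z) (0:ℝ), wm s * F ((Gmu μ n s).toReal) ∂μ := by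
      rw [psiMinus]
      apply lintegral_congr_ae
      have hnull : μ.restrict (Icc (-z) (0:ℝ)) {s : ℝ | ¬ s < 0} = 0 := by
        rw [Measure.restrict_apply]
        · apply measure_mono_null _ (hatomless 0)
          rintro u ⟨hu1, -, hu2⟩
          simp only [mem_setOf_eq, not_lt] at hu1
          simp [le_antisymm hu2 hu1]
        · have : {s : ℝ | ¬ s < 0} = Ici 0 := by ext u; simp [not_lt]
          rw [this]; exact measurableSet_Ici
      have hmem : {s : ℝ | s < 0} ∈ ae (μ.restrict (Icc (-z) (0:ℝ))) := by
        rw [mem_ae_iff, Set.compl_setOf]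
        exact hnull
      filter_upwards [hmem] with s hs
      have hsn : s < (0:ℝ) := hs
      show psiMinusIntegrand μ n s = wm s * F ((Gmu μ n s).toReal)
      rw [hFdef]
      simp only []
      rw [ENNReal.ofReal_toReal (Gmu_ne_top μ n hnsupp s),
        claimBminus μ n hatomless hnfin hnsupp s hsn, psiMinusIntegrand,
        ENNReal.mul_inv (Or.inr ENNReal.ofReal_ne_top)
          (Or.inl (ne_of_lt (hnfin' s hsn)))]
    rw [h1]
    -- transfer to the reflected measure
    set μ' : MeasureTheory.Measure ℝ := Measure.map (fun t : ℝ => -t) μ with hμ'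
    have hμ'atom : ∀ x : ℝ, μ' {x} = 0 := by
      intro x
      rw [hμ', Measure.map_apply measurable_neg (measurableSet_singleton x)]
      have : (fun t : ℝ => -t) ⁻¹' {x} = {-x} := by
        ext u; simp [neg_eq_iff_eq_neg]
      rw [this]
      exact hatomless _
    have hpre : ∀ t : ℝ, (fun u : ℝ => -u) ⁻¹' Icc (0:ℝ) t = Icc (-t) 0 := by
      intro t
      ext u
      simp only [mem_preimage, mem_Icc]
      constructor
      · rintro ⟨h1', h2'⟩; exact ⟨by linarith, by linarith⟩
      · rintro ⟨h1', h2'⟩; exact ⟨by linarith, by linarith⟩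
    have htrans : ∀ (g : ℝ → ℝ≥0∞), Measurable g → ∀ t : ℝ,
        (∫⁻ u in Icc (0:ℝ) t, g (-u) ∂μ') = ∫⁻ x in Icc (-t) (0:ℝ), g x ∂μ := by
      intro g hg t
      have hg' : Measurable fun u : ℝ => g (-u) := hg.comp measurable_neg
      rw [hμ', Measure.restrict_map measurable_neg measurableSet_Icc,
        lintegral_map hg' measurable_neg, hpre t]
      simp only [neg_neg]
    have hGD : ∀ t : ℝ, (∫⁻ u in Icc (0:ℝ) t, wm (-u) ∂μ') = Gmu μ n (-t) := by
      intro t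
      rw [htrans wm (meas_wminus n) t]
      rfl
    have h2 : (∫⁻ s in Icc (-z) (0:ℝ), wm s * F ((Gmu μ n s).toReal) ∂μ)
        = ∫⁻ u in Icc (0:ℝ) z, wm (-u) * F ((Gmu μ n (-u)).toReal) ∂μ' := by
      rw [htrans _ hg z]
    rw [h2]
    have h3 : (∫⁻ u in Icc (0:ℝ) z, wm (-u) * F ((Gmu μ n (-u)).toReal) ∂μ')
        = ∫⁻ u in Icc (0:ℝ) z, wm (-u)
            * F ((∫⁻ x in Icc (0:ℝ) u, wm (-x) ∂μ').toReal) ∂μ' := by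
      exact lintegral_congr fun u => by rw [hGD u]
    rw [h3]
    have h4 := lemA μ' hμ'atom (fun u => wm (-u))
      ((meas_wminus n).comp measurable_neg) F hFmeas z
      (by rw [hGD z]; exact hvfin)
    rw [h4, hGD z, ← hv]
  -- final case split
  rw [hminus]
  by_cases hne : (DinvSet μ n (Gmu μ n (-z))).Nonempty
  · rw [if_pos hne]
    set c := sInf (DinvSet μ n (Gmu μ n (-z))) with hcdef
    have hbdd : BddBelow (DinvSet μ n (Gmu μ n (-z))) := ⟨0, fun u hu => hu.1⟩
    have hc0 : 0 ≤ c := le_csInf hne fun u hu => hu.1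
    set νp : MeasureTheory.Measure ℝ := μ.withDensity wp with hνp
    have hνpIcc : ∀ y : ℝ, νp (Icc 0 y) = Dmu μ n y :=
      fun y => withDensity_apply _ measurableSet_Icc
    have hνatom : ∀ x : ℝ, νp {x} = 0 := by
      intro x
      rw [hνp, withDensity_apply _ (measurableSet_singleton x),
        setLIntegral_measure_zero _ _ (hatomless x)]
    -- Dmu c = v
    have hDle : Dmu μ n c ≤ v := by
      rcases eq_or_lt_of_le hc0 with h | h
      · rw [← hνpIcc, ← h, Icc_self, hνatom]
        exact zero_le
      · have hIco : Ico (0:ℝ) c = ⋃ k : ℕ, Icc 0 (c - c / (k + 1)) := by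
          ext u
          simp only [mem_Ico, mem_iUnion, mem_Icc]
          constructor
          · rintro ⟨hu0, huc⟩
            have hcu : 0 < c - u := sub_pos.2 huc
            obtain ⟨k, hk⟩ := exists_div_lt (div_pos hcu h)
            refine ⟨k, hu0, ?_⟩
            have h2 : c * (1 / ((k:ℝ)+1)) < c * ((c - u) / c) :=
              mul_lt_mul_of_pos_left hk h
            have h3 : c * ((c - u) / c) = c - u := by field_simp
            have h4 : c * (1 / ((k:ℝ)+1)) = c / ((k:ℝ)+1) := by ring
            rw [h3, h4] at h2
            linarith
          · rintro ⟨k, hu0, hu1⟩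
            have : 0 < c / ((k : ℝ) + 1) := by positivity
            exact ⟨hu0, by linarith⟩
        have hdir : Monotone fun k : ℕ => Icc (0:ℝ) (c - c / (k + 1)) := by
          intro j k hjk
          apply Icc_subset_Icc le_rfl
          have hjk' : ((j : ℝ) + 1) ≤ ((k : ℝ) + 1) := by
            have := (Nat.cast_le (α := ℝ)).2 hjk
            linarith
          have : c / ((k : ℝ) + 1) ≤ c / ((j : ℝ) + 1) :=
            div_le_div_of_nonneg_left (le_of_lt h) (by positivity) hjk'
          linarith
        have heq : νp (Icc 0 c) = νp (Ico 0 c) := by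
          rw [← Ico_union_right hc0, measure_union
            (Set.disjoint_singleton_right.2 (fun hmem => absurd hmem.2 (lt_irrefl c)))
            (measurableSet_singleton c), hνatom c, add_zero]
        rw [← hνpIcc, heq, hIco, (hdir.directed_le).measure_iUnion]
        apply iSup_le
        intro k
        rw [hνpIcc]
        by_contra hgt
        push_neg at hgt
        have hds : c / ((k:ℝ) + 1) ≤ c := by
          apply div_le_self hc0
          have : (0:ℝ) ≤ (k:ℝ) := Nat.cast_nonneg k
          linarith
        have hmem : c - c / ((k : ℝ) + 1) ∈ DinvSet μ n (Gmu μ n (-z)) :=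
          ⟨by linarith, hgt⟩
        have hge := csInf_le hbdd hmem
        rw [← hcdef] at hge
        have hpos2 : 0 < c / ((k : ℝ) + 1) := by positivity
        linarith
    have hDge : v ≤ Dmu μ n c := by
      set A : ℕ → Set ℝ := fun k => Icc (0:ℝ) (c + 1 / (k + 1)) with hA
      have hiA : ⋂ k, A k = Icc (0:ℝ) c := by
        ext u
        simp only [hA, mem_iInter, mem_Icc]
        constructor
        · intro h
          refine ⟨(h 0).1, ?_⟩
          by_contra hu
          push_neg at hu
          have h1 : (0:ℝ) < u - c := sub_pos.2 hu
          obtain ⟨k, hk⟩ := exists_div_lt h1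
          have h2 := (h k).2
          linarith
        · rintro ⟨h0, h1⟩ k
          have : (0:ℝ) < 1 / ((k:ℝ)+1) := by positivity
          exact ⟨h0, by linarith⟩
      have hanti : Directed (· ⊇ ·) A := by
        apply Antitone.directed_ge
        intro j k hjk
        apply Icc_subset_Icc le_rfl
        have hjk' : ((j : ℝ) + 1) ≤ ((k : ℝ) + 1) := by
          have := (Nat.cast_le (α := ℝ)).2 hjk
          linarith
        have : 1 / ((k:ℝ) + 1) ≤ 1 / ((j:ℝ) + 1) :=
          div_le_div_of_nonneg_left one_pos.le (by positivity) hjk'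
        linarith
      have hfinA : ∃ k, νp (A k) ≠ ⊤ := by
        refine ⟨0, ?_⟩
        rw [hA]
        simp only []
        rw [hνpIcc]
        exact Dmu_ne_top μ n hnsupp _
      have heq : νp (⋂ k, A k) = ⨅ k, νp (A k) :=
        hanti.measure_iInter (fun k => measurableSet_Icc.nullMeasurableSet) hfinA
      rw [← hνpIcc, ← hiA, heq]
      apply le_iInf
      intro k
      have hck : c < c + 1 / ((k:ℝ)+1) := by
        have : (0:ℝ) < 1 / ((k:ℝ)+1) := by positivity
        linarith
      obtain ⟨u, huS, huk⟩ := exists_lt_of_csInf_lt hne (by rw [← hcdef]; exact hck)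
      calc v ≤ Dmu μ n u := le_of_lt huS.2
        _ = νp (Icc 0 u) := (hνpIcc u).symm
        _ ≤ νp (A k) := measure_mono (Icc_subset_Icc le_rfl (le_of_lt huk))
    have hDc : Dmu μ n c = v := le_antisymm hDle hDge
    calc (∫⁻ s in Ico (0:ℝ) v.toReal, F s ∂volume)
        = ∫⁻ s in Ico (0:ℝ) (Dmu μ n c).toReal, F s ∂volume := by rw [hDc]
      _ = ∫⁻ s in Icc (0:ℝ) c, psiPlusIntegrand μ n s ∂μ := (key c).symm
      _ = ∫⁻ s in Ico (0:ℝ) c, psiPlusIntegrand μ n s ∂μ :=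
          (setLIntegral_congr (Ico_ae_eq_Icc (μ := μ) (a := (0:ℝ)) (b := c))).symm
  · rw [if_neg hne]
    have hub : ∀ y : ℝ, Dmu μ n y ≤ v := by
      have h0 : ∀ y : ℝ, 0 ≤ y → Dmu μ n y ≤ v := by
        intro y hy
        by_contra hlt
        push_neg at hlt
        exact hne ⟨y, hy, hlt⟩
      intro y
      calc Dmu μ n y ≤ Dmu μ n (max y 0) := Dmu_mono μ n (le_max_left _ _)
        _ ≤ v := h0 _ (le_max_right _ _)
    have hsupD : v = ⨆ y : ℝ, Dmu μ n y := by
      apply le_antisymm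
      · rw [hv, hcompat]
        exact le_iSup (fun x => Gmu μ n x) (-z)
      · exact iSup_le hub
    -- measurability of the integrand
    have hmeasInt : Measurable (psiPlusIntegrand μ n) := by
      have hA : Antitone fun s : ℝ => n (Ici s) := fun a b hab =>
        measure_mono (Ici_subset_Ici.2 hab)
      have hB : Antitone fun s : ℝ => (μ (Ici s)).toReal := by
        intro a b hab
        exact ENNReal.toReal_mono (measure_ne_top μ _) (measure_mono (Ici_subset_Ici.2 hab))
      have hC : Monotone fun s : ℝ => mubarGinv μ n (Dmu μ n s) :=
        fun a b hab => mubarGinv_mono μ n (Dmu_mono μ n hab)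
      exact (hA.measurable.mul
        (((measurable_const.add hB.measurable).sub hC.measurable).ennreal_ofReal)).inv
    set νI : MeasureTheory.Measure ℝ := μ.withDensity (psiPlusIntegrand μ n) with hνI
    set volF : MeasureTheory.Measure ℝ := volume.withDensity F with hvolF
    have hIci : Ici (0:ℝ) = ⋃ k : ℕ, Icc 0 (k : ℝ) := by
      ext u
      simp only [mem_Ici, mem_iUnion, mem_Icc]
      constructor
      · intro hu
        obtain ⟨k, hk⟩ := exists_nat_ge u
        exact ⟨k, hu, hk⟩
      · rintro ⟨k, hu, -⟩
        exact hu
    have hdirI : Monotone fun k : ℕ => Icc (0:ℝ) (k : ℝ) :=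
      fun j k hjk => Icc_subset_Icc le_rfl ((Nat.cast_le (α := ℝ)).2 hjk)
    have hUIco : (⋃ k : ℕ, Ico (0:ℝ) ((Dmu μ n k).toReal)) = Ico (0:ℝ) v.toReal := by
      ext u
      simp only [mem_iUnion, mem_Ico]
      constructor
      · rintro ⟨k, hu0, huk⟩
        refine ⟨hu0, lt_of_lt_of_le huk ?_⟩
        exact ENNReal.toReal_mono hvfin (hub k)
      · rintro ⟨hu0, huv⟩
        have h1 : ENNReal.ofReal u < v := by
          rw [← ENNReal.ofReal_toReal hvfin]
          exact ENNReal.ofReal_lt_ofReal_iff_of_nonneg hu0 |>.2 huv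
        rw [hsupD, lt_iSup_iff] at h1
        obtain ⟨y, hy⟩ := h1
        obtain ⟨k, hk⟩ := exists_nat_ge y
        refine ⟨k, hu0, ?_⟩
        have h2 : ENNReal.ofReal u < Dmu μ n k := lt_of_lt_of_le hy (Dmu_mono μ n hk)
        exact (ENNReal.ofReal_lt_iff_lt_toReal hu0 (Dmu_ne_top μ n hnsupp k)).1 h2
    have hmonoIco : Monotone fun k : ℕ => Ico (0:ℝ) ((Dmu μ n k).toReal) := by
      intro j k hjk
      apply Ico_subset_Ico le_rfl
      exact ENNReal.toReal_mono (Dmu_ne_top μ n hnsupp k)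
        (Dmu_mono μ n ((Nat.cast_le (α := ℝ)).2 hjk))
    calc (∫⁻ s in Ico (0:ℝ) v.toReal, F s ∂volume)
        = volF (Ico (0:ℝ) v.toReal) := (withDensity_apply _ measurableSet_Ico).symm
      _ = volF (⋃ k : ℕ, Ico (0:ℝ) ((Dmu μ n k).toReal)) := by rw [hUIco]
      _ = ⨆ k : ℕ, volF (Ico (0:ℝ) ((Dmu μ n k).toReal)) :=
          (hmonoIco.directed_le).measure_iUnion
      _ = ⨆ k : ℕ, ∫⁻ s in Ico (0:ℝ) ((Dmu μ n k).toReal), F s ∂volume := by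
          apply iSup_congr
          intro k
          exact withDensity_apply _ measurableSet_Ico
      _ = ⨆ k : ℕ, ∫⁻ s in Icc (0:ℝ) (k:ℝ), psiPlusIntegrand μ n s ∂μ := by
          apply iSup_congr
          intro k
          exact (key (k:ℝ)).symm
      _ = ⨆ k : ℕ, νI (Icc (0:ℝ) (k:ℝ)) := by
          apply iSup_congr
          intro k
          exact (withDensity_apply _ measurableSet_Icc).symm
      _ = νI (⋃ k : ℕ, Icc (0:ℝ) (k:ℝ)) := ((hdirI.directed_le).measure_iUnion).symm
      _ = νI (Ici (0:ℝ)) := by rw [← hIci]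
      _ = ∫⁻ s in Ici (0:ℝ), psiPlusIntegrand μ n s ∂μ :=
          withDensity_apply _ measurableSet_Ici
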